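/- arXiv:0901.4933 — 3 statements merged into one kernel-verified Lean document; each statement's English description precedes it below -/
import Mathlib

section
/- In a cubic algebra, if p ≼ q (i.e., Δ(p∨q, p) ≤ q) and the meet p∧q exists, then p ≤ q. -/
namespace CubicPaper

/-- Existence of the binary meet of `a` and `b`. -/
def MeetExists {L : Type*} [SemilatticeSup L] (a b : L) : Prop :=
  ∃ m : L, IsGLB ({a, b} : Set L) m

/-- A cubic algebra: join semilattice with top `⊤` and a (totalized) binary
operation `delta`, whose axioms are only assumed where the paper defines them. -/
structure CubicAlgebra (L : Type*) [SemilatticeSup L] [OrderTop L] where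
  delta : L → L → L
  op : L → L → L
  op_def : ∀ x y : L, op x y = delta ⊤ (delta (x ⊔ y) y) ⊔ y
  ax_a : ∀ x y : L, x ≤ y → delta y x ⊔ x = y
  ax_b : ∀ x y z : L, x ≤ y → y ≤ z →
    delta z (delta y x) = delta (delta z y) (delta z x)
  ax_c : ∀ x y : L, x ≤ y → delta y (delta y x) = x
  ax_d : ∀ x y z : L, x ≤ y → y ≤ z → delta z x ≤ delta z y
  ax_e : ∀ x y : L, op (op x y) y = x ⊔ y
  ax_f : ∀ x y z : L, op x (op y z) = op y (op x z)

namespace CubicAlgebra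

variable {L : Type*} [SemilatticeSup L] [OrderTop L]

/-- `a ≼ b` iff `Δ(a ⊔ b, a) ≤ b`. -/
def preceq (C : CubicAlgebra L) (a b : L) : Prop := C.delta (a ⊔ b) a ≤ b

/-- `a ≃ b` iff `Δ(a ⊔ b, a) = b`. -/
def csim (C : CubicAlgebra L) (a b : L) : Prop := C.delta (a ⊔ b) a = b

/-- The MR axiom: for `a, b < x`, `Δ(x,a) ⊔ b < x` iff `a ⊓ b` does not exist. -/
def IsMR (C : CubicAlgebra L) : Prop :=
  ∀ a b x : L, a < x → b < x → (C.delta x a ⊔ b < x ↔ ¬ MeetExists a b)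

/-- A filter: nonempty, upward closed, closed under existing binary meets. -/
def CFilter (F : Set L) : Prop :=
  F.Nonempty ∧ (∀ a b : L, a ∈ F → a ≤ b → b ∈ F) ∧
    (∀ a b m : L, a ∈ F → b ∈ F → IsGLB ({a, b} : Set L) m → m ∈ F)

/-- The filter generated by a set: intersection of all filters containing it. -/
def filterGen (S : Set L) : Set L := ⋂₀ {T : Set L | CFilter T ∧ S ⊆ T}

/-- The subalgebra generated by a filter `F`: `{Δ(x,y) : y ≤ x, x,y ∈ F}`. -/
def gen (C : CubicAlgebra L) (F : Set L) : Set L :=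
  {z : L | ∃ x ∈ F, ∃ y ∈ F, y ≤ x ∧ z = C.delta x y}

/-- `F_g = {Δ(g ⊔ f, f) : f ∈ F}`. -/
def shift (C : CubicAlgebra L) (F : Set L) (g : L) : Set L :=
  {z : L | ∃ f ∈ F, z = C.delta (g ⊔ f) f}

/-- For filters `A ⊆ B`, `A → B = {x ∈ B : ∀ a ∈ A, x ⊔ a = ⊤}`. -/
def arrow (A B : Set L) : Set L := {x : L | x ∈ B ∧ ∀ a ∈ A, x ⊔ a = ⊤}

/-- `Δ(G, F) = Δ(𝟏, G→F) ∨ G`, as a generated filter. -/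
def deltaF (C : CubicAlgebra L) (G F : Set L) : Set L :=
  filterGen ((C.delta ⊤ '' arrow G F) ∪ G)

/-- `G` is `F`-Boolean iff `G ∨ (G→F) = F`. -/
def FBoolean (F G : Set L) : Prop :=
  filterGen (G ∪ arrow G F) = F

end CubicAlgebra

end CubicPaper

namespace CubicPaper
open CubicAlgebra

theorem stmt0 {L : Type*} [SemilatticeSup L] [OrderTop L] (C : CubicAlgebra L)
    (p q : L) (h : C.preceq p q) (hm : MeetExists p q) : p ≤ q := by
  obtain ⟨m, hg⟩ := hm
  have hmp : m ≤ p := hg.1 (by simp)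
  have hmq : m ≤ q := hg.1 (by simp)
  set s := p ⊔ q with hs
  have hps : p ≤ s := le_sup_left
  have hms : m ≤ s := hmp.trans hps
  have h1 : C.delta s m ≤ C.delta s p := C.ax_d m p s hmp hps
  have h2 : C.delta s m ≤ q := h1.trans h
  have h3 : C.delta s m ⊔ m = s := C.ax_a m s hms
  have h4 : s ≤ q := by rw [← h3]; exact sup_le h2 hmq
  exact hps.trans h4

end CubicPaper
end

section
/- In a cubic algebra, if p ≃ q (i.e., Δ(p∨q, p) = q) and the meet p∧q exists, then p = q. -/
namespace CubicPaper
open CubicAlgebra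

theorem stmt1 {L : Type*} [SemilatticeSup L] [OrderTop L] (C : CubicAlgebra L)
    (p q : L) (h : C.csim p q) (hm : MeetExists p q) : p = q := by
  obtain ⟨m, hglb⟩ := hm
  have hmp : m ≤ p := hglb.1 (by simp)
  have hmq : m ≤ q := hglb.1 (by simp [Set.mem_insert_iff])
  have hps : p ≤ p ⊔ q := le_sup_left
  have hqs : q ≤ p ⊔ q := le_sup_right
  have hms : m ≤ p ⊔ q := hmp.trans hps
  have hq : C.delta (p ⊔ q) p = q := h
  have hp : C.delta (p ⊔ q) q = p := by
    have := C.ax_c p (p ⊔ q) hps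
    rw [hq] at this; exact this
  -- d := Δ(p⊔q, m) is ≤ q and ≤ p
  have hd1 : C.delta (p ⊔ q) m ≤ q := by
    have := C.ax_d m p (p ⊔ q) hmp hps
    rwa [hq] at this
  have hd2 : C.delta (p ⊔ q) m ≤ p := by
    have := C.ax_d m q (p ⊔ q) hmq hqs
    rwa [hp] at this
  have hdm : C.delta (p ⊔ q) m ≤ m := by
    apply hglb.2
    rintro x (rfl | rfl)
    · exact hd2
    · simp_all
  have hmd : m ≤ C.delta (p ⊔ q) m := by
    have h1 := C.ax_d (C.delta (p ⊔ q) m) m (p ⊔ q) hdm hms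
    rwa [C.ax_c m (p ⊔ q) hms] at h1
  have heq : C.delta (p ⊔ q) m = m := le_antisymm hdm hmd
  have := C.ax_a m (p ⊔ q) hms
  rw [heq, sup_idem] at this
  -- m = p ⊔ q, and m ≤ p, m ≤ q
  have hpe : p = m := le_antisymm (this ▸ hps) hmp
  have hqe : q = m := le_antisymm (this ▸ hqs) hmq
  rw [hpe, hqe]

end CubicPaper
end

section
/- Let F be a filter of an MR-algebra and g ∈ F. Then the principal filter [g,𝟏] is F-Boolean, i.e., [g,𝟏] ∨ ([g,𝟏]→F) = F; equivalently every f ∈ F can be written as f = g' ∧ h with g' ≥ g and h ∈ F satisfying h∨k = 𝟏 for all k ≥ g. -/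
namespace CubicPaper
open CubicAlgebra

section Aux

variable {L : Type*} [SemilatticeSup L] [OrderTop L] (C : CubicAlgebra L)

lemma aux_delta_top_sup (c : L) : C.delta ⊤ c ⊔ c = ⊤ := C.ax_a c ⊤ le_top

lemma aux_delta_self (b : L) : C.delta b b = b := by
  have h1 : C.delta b b ⊔ b = b := C.ax_a b b le_rfl
  have hle : C.delta b b ≤ b := le_sup_left.trans h1.le
  have h2 : C.delta b (C.delta b b) = b := C.ax_c b b le_rfl
  have h3 : C.delta b (C.delta b b) ≤ C.delta b b := C.ax_d _ b b hle le_rfl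
  exact le_antisymm hle (h2.symm.le.trans h3)

lemma aux_le_op (a b : L) : b ≤ C.op a b := by
  rw [C.op_def]; exact le_sup_right

lemma aux_op_eq_top_of_le {a b : L} (h : a ≤ b) : C.op a b = ⊤ := by
  rw [C.op_def, sup_eq_right.mpr h, aux_delta_self]
  exact C.ax_a b ⊤ le_top

lemma aux_op_top (b : L) : C.op ⊤ b = b := by
  rw [C.op_def, top_sup_eq, C.ax_c b ⊤ le_top, sup_idem]

lemma aux_le_of_op_eq_top {a b : L} (h : C.op a b = ⊤) : a ≤ b := by
  have := C.ax_e a b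
  rw [h, aux_op_top] at this
  exact le_sup_left.trans this.ge

lemma aux_sup_op (a b : L) : a ⊔ C.op a b = ⊤ := by
  set d := C.delta (a ⊔ b) b with hd
  have hdle : d ≤ a ⊔ b := le_sup_left.trans (C.ax_a b (a ⊔ b) le_sup_right).le
  have htop : C.delta ⊤ d ⊔ d = ⊤ := C.ax_a d ⊤ le_top
  have : (⊤ : L) ≤ a ⊔ C.op a b := by
    rw [C.op_def, ← hd]
    calc (⊤ : L) = C.delta ⊤ d ⊔ d := htop.symm
    _ ≤ C.delta ⊤ d ⊔ (a ⊔ b) := sup_le_sup_left hdle _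
    _ ≤ a ⊔ (C.delta ⊤ d ⊔ b) :=
        sup_le (le_sup_of_le_right le_sup_left)
          (sup_le le_sup_left (le_sup_of_le_right le_sup_right))
  exact le_antisymm le_top this

lemma aux_key {x y z : L} (hyx : y ≤ x) (hzx : z ≤ x) (hz : z ≤ C.op x y) : z ≤ y := by
  set z' := z ⊔ y with hz'
  have hz'x : z' ≤ x := sup_le hzx hyx
  have hz'h : z' ≤ C.op x y := sup_le hz (aux_le_op C x y)
  have step1 : C.op z' (C.op x y) = ⊤ := aux_op_eq_top_of_le C hz'h
  have step2 : C.op x (C.op z' y) = ⊤ := (C.ax_f x z' y).trans step1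
  have step3 : x ≤ C.op z' y := aux_le_of_op_eq_top C step2
  have hyz' : y ≤ z' := le_sup_right
  have hopz' : C.op z' y = C.delta ⊤ (C.delta z' y) ⊔ y := by
    rw [C.op_def, sup_eq_left.mpr hyz']
  set d' := C.delta z' y with hd'
  have hd'z' : d' ≤ z' := le_sup_left.trans (C.ax_a y z' hyz').le
  have hd'le : d' ≤ C.op z' y := hd'z'.trans (hz'x.trans step3)
  have hDd'le : C.delta ⊤ d' ≤ C.op z' y := by rw [hopz']; exact le_sup_left
  have htop : C.op z' y = ⊤ := le_antisymm le_top
    ((aux_delta_top_sup C d').symm.le.trans (sup_le hDd'le hd'le))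
  have : z' ≤ y := aux_le_of_op_eq_top C htop
  exact le_sup_left.trans this

lemma aux_isGLB {x y : L} (hyx : y ≤ x) : IsGLB ({x, C.op x y} : Set L) y := by
  constructor
  · rintro a (rfl | ha)
    · exact hyx
    · simp only [Set.mem_singleton_iff] at ha
      exact ha ▸ aux_le_op C x y
  · intro z hzlb
    have hzx : z ≤ x := hzlb (Set.mem_insert _ _)
    have hzh : z ≤ C.op x y := hzlb (Set.mem_insert_iff.mpr (Or.inr rfl))
    exact aux_key C hyx hzx hzh

lemma aux_op_sup (g f : L) : C.op g f = C.op (g ⊔ f) f := by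
  rw [C.op_def, C.op_def, sup_assoc, sup_idem]

end Aux

theorem stmt16 {L : Type*} [SemilatticeSup L] [OrderTop L] (C : CubicAlgebra L)
    (hMR : C.IsMR) (F : Set L) (hF : CFilter F) (g : L) (hg : g ∈ F) :
    FBoolean F (Set.Ici g) := by
  obtain ⟨hne, hup, hmeet⟩ := hF
  apply Set.Subset.antisymm
  · -- filterGen ⊆ F, since F is a filter containing the union
    intro f hf
    refine hf F ⟨⟨hne, hup, hmeet⟩, ?_⟩
    rintro x (hx | hx)
    · exact hup g x hg hx
    · exact hx.1
  · -- F ⊆ filterGen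
    intro f hf
    intro T hT
    obtain ⟨⟨hTne, hTup, hTmeet⟩, hsub⟩ := hT
    have hx : g ⊔ f ∈ T := hsub (Or.inl (le_sup_left : g ≤ g ⊔ f))
    have hfh : f ≤ C.op g f := aux_le_op C g f
    have hhF : C.op g f ∈ F := hup f _ hf hfh
    have hh : C.op g f ∈ T := by
      refine hsub (Or.inr ⟨hhF, ?_⟩)
      intro a ha
      have h1 : g ⊔ C.op g f = ⊤ := aux_sup_op C g f
      refine le_antisymm le_top ?_
      calc (⊤ : L) = g ⊔ C.op g f := h1.symm
      _ ≤ a ⊔ C.op g f := sup_le_sup_right ha _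
      _ = C.op g f ⊔ a := sup_comm _ _
    have hglb : IsGLB ({g ⊔ f, C.op g f} : Set L) f := by
      rw [aux_op_sup]
      exact aux_isGLB C le_sup_right
    exact hTmeet _ _ f hx hh hglb

end CubicPaper
end
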